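/- arXiv:2210.03655 — 2 statements merged into one kernel-verified Lean document; each statement's English description precedes it below -/
import Mathlib

section
/- Let ω₂, ω₃ be real numbers and 0 < ρ₁ < ρ₂ < 1. Let D be the 4×4 real matrix with rows [−cos(πρ₁ω₂), −sin(πρ₁ω₂), 0, 0], [ω₂sin(πρ₁ω₂), −ω₂cos(πρ₁ω₂), 0, 0], [cos(πρ₂ω₂), sin(πρ₂ω₂), −cos(πρ₂ω₃), −sin(πρ₂ω₃)], and [−ω₂sin(πρ₂ω₂), ω₂cos(πρ₂ω₂), ω₃sin(πρ₂ω₃), −ω₃cos(πρ₂ω₃)]. Then det(D) = ω₂·ω₃. In particular, D is nonsingular whenever ω₂ ≠ 0 and ω₃ ≠ 0. -/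
open Real Matrix

theorem stmt_0 (ω₂ ω₃ ρ₁ ρ₂ : ℝ) (hρ₁ : 0 < ρ₁) (hρ₁₂ : ρ₁ < ρ₂) (hρ₂ : ρ₂ < 1)
    (D : Matrix (Fin 4) (Fin 4) ℝ)
    (hD : D = !![-Real.cos (π * ρ₁ * ω₂), -Real.sin (π * ρ₁ * ω₂), 0, 0;
                 ω₂ * Real.sin (π * ρ₁ * ω₂), -(ω₂ * Real.cos (π * ρ₁ * ω₂)), 0, 0;
                 Real.cos (π * ρ₂ * ω₂), Real.sin (π * ρ₂ * ω₂),
                   -Real.cos (π * ρ₂ * ω₃), -Real.sin (π * ρ₂ * ω₃);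
                 -(ω₂ * Real.sin (π * ρ₂ * ω₂)), ω₂ * Real.cos (π * ρ₂ * ω₂),
                   ω₃ * Real.sin (π * ρ₂ * ω₃), -(ω₃ * Real.cos (π * ρ₂ * ω₃))]) :
    D.det = ω₂ * ω₃ ∧ (ω₂ ≠ 0 → ω₃ ≠ 0 → IsUnit D) := by
  have hdet : D.det = ω₂ * ω₃ := by
    subst hD
    simp [Matrix.det_succ_row_zero, Fin.sum_univ_succ, Fin.succAbove]
    have h1 := Real.sin_sq_add_cos_sq (π * ρ₁ * ω₂)
    have h2 := Real.sin_sq_add_cos_sq (π * ρ₂ * ω₃)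
    linear_combination (ω₂ * ω₃ * (Real.sin (π * ρ₂ * ω₃) ^ 2 + Real.cos (π * ρ₂ * ω₃) ^ 2)) * h1 +
      ω₂ * ω₃ * h2
  refine ⟨hdet, fun h2 h3 => ?_⟩
  rw [Matrix.isUnit_iff_isUnit_det, isUnit_iff_ne_zero, hdet]
  exact mul_ne_zero h2 h3
end

section
/- Let 0 < ρ₁ < ρ₂ < 1 and α₁, α₂, α₃ ∈ ℝ. For each positive integer j, define φⱼ(z) = sin(jz), (Lφⱼ)(z) = −j²sin(jz) + α(z)²sin(jz), μⱼ = (∫₀^π φⱼ·Lφⱼ dz)/(∫₀^π φⱼ² dz), and Eⱼ = (∫₀^π (Lφⱼ)² dz − μⱼ²·∫₀^π φⱼ² dz)/(∫₀^π (Lφⱼ)² dz) (defined for all j large enough that the denominator is nonzero). Then Eⱼ → 0 as j → ∞. -/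
open Real intervalIntegral Filter MeasureTheory

lemma sinsq_integral_aux (j : ℕ) (hj : 1 ≤ j) :
    ∫ z in (0:ℝ)..π, Real.sin (j * z) ^ 2 = π / 2 := by
  have hc : (j:ℝ) ≠ 0 := Nat.cast_ne_zero.2 (by omega)
  have hderiv : ∀ z : ℝ, HasDerivAt (fun z => z / 2 - Real.sin (2 * j * z) / (4 * j))
      (Real.sin ((j:ℝ) * z) ^ 2) z := by
    intro z
    have h1 : HasDerivAt (fun z : ℝ => 2 * (j:ℝ) * z) (2 * j) z := by
      simpa using (hasDerivAt_id z).const_mul (2 * (j:ℝ))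
    have h2 := (h1.sin).div_const (4 * j)
    have h4 : HasDerivAt (fun z : ℝ => z / 2) (1 / 2) z := by
      simpa using (hasDerivAt_id z).div_const 2
    refine (h4.sub h2).congr_deriv ?_
    have hcos : Real.cos (2 * (j:ℝ) * z) = 1 - 2 * Real.sin ((j:ℝ) * z) ^ 2 := by
      have h2m : (2:ℝ) * j * z = 2 * ((j:ℝ) * z) := by ring
      rw [h2m, Real.cos_two_mul]
      have := Real.sin_sq_add_cos_sq ((j:ℝ) * z)
      linarith
    rw [hcos]
    field_simp
    ring
  rw [intervalIntegral.integral_eq_sub_of_hasDerivAt (fun x _ => hderiv x)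
    ((Continuous.intervalIntegrable (by fun_prop) 0 π))]
  have hs : Real.sin (2 * (j:ℝ) * π) = 0 := by
    have h : (2 * (j:ℝ)) * π = ((2 * j : ℕ) : ℝ) * π := by push_cast; ring
    rw [h, Real.sin_nat_mul_pi]
  simp [hs]

lemma bdd_meas_intervalIntegrable_aux {f : ℝ → ℝ} (hf : Measurable f) (M : ℝ)
    (h : ∀ z, |f z| ≤ M) : IntervalIntegrable f MeasureTheory.volume 0 π := by
  rw [intervalIntegrable_iff]
  apply MeasureTheory.Integrable.mono' (g := fun _ => M)
    (MeasureTheory.integrableOn_const measure_Ioc_lt_top.ne)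
  · exact hf.aestronglyMeasurable.restrict
  · exact MeasureTheory.ae_of_all _ h

lemma div_div_div_aux (a b c : ℝ) (hc : c ≠ 0) : (a / c) / (b / c) = a / b := by
  rcases eq_or_ne b 0 with rfl | hb
  · simp
  · field_simp

theorem stmt_11 (ρ₁ ρ₂ α₁ α₂ α₃ : ℝ)
    (hρ₁ : 0 < ρ₁) (hρ₁₂ : ρ₁ < ρ₂) (hρ₂ : ρ₂ < 1)
    (a : ℝ → ℝ)
    (ha : ∀ z, a z = if z < π * ρ₁ then α₁ else if z < π * ρ₂ then α₂ else α₃)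
    (φ Lφ : ℕ → ℝ → ℝ)
    (hφ : ∀ j z, φ j z = Real.sin (j * z))
    (hLφ : ∀ j z, Lφ j z = -(j : ℝ) ^ 2 * Real.sin (j * z) + (a z) ^ 2 * Real.sin (j * z))
    (μ E : ℕ → ℝ)
    (hμ : ∀ j, μ j = (∫ z in (0:ℝ)..π, φ j z * Lφ j z) / (∫ z in (0:ℝ)..π, (φ j z) ^ 2))
    (hE : ∀ j, E j = ((∫ z in (0:ℝ)..π, (Lφ j z) ^ 2)
        - (μ j) ^ 2 * ∫ z in (0:ℝ)..π, (φ j z) ^ 2) / (∫ z in (0:ℝ)..π, (Lφ j z) ^ 2)) :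
    Tendsto E atTop (nhds 0) := by
  have hπ : (0:ℝ) < π := Real.pi_pos
  have haeq : a = fun z => if z < π * ρ₁ then α₁ else if z < π * ρ₂ then α₂ else α₃ :=
    funext ha
  have hma : Measurable a := by
    rw [haeq]
    exact Measurable.ite measurableSet_Iio measurable_const
      (Measurable.ite measurableSet_Iio measurable_const measurable_const)
  set M : ℝ := α₁ ^ 2 + α₂ ^ 2 + α₃ ^ 2 + 1 with hMdef
  have hM0 : 0 < M := by positivity
  have haM : ∀ z, a z ^ 2 ≤ M := by
    intro z; rw [ha z]
    split_ifs <;> nlinarith [sq_nonneg α₁, sq_nonneg α₂, sq_nonneg α₃]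
  have haM4 : ∀ z, a z ^ 4 ≤ M ^ 2 := by
    intro z
    have h1 := haM z
    have h2 := sq_nonneg (a z)
    nlinarith
  set A : ℕ → ℝ := fun j => ∫ z in (0:ℝ)..π, a z ^ 2 * Real.sin (j * z) ^ 2 with hAdef
  set B : ℕ → ℝ := fun j => ∫ z in (0:ℝ)..π, a z ^ 4 * Real.sin (j * z) ^ 2 with hBdef
  -- integrability facts
  have hsin_meas : ∀ j : ℕ, Measurable fun z : ℝ => Real.sin (j * z) ^ 2 := by
    intro j
    exact ((Real.measurable_sin.comp (measurable_const.mul measurable_id)).pow_const 2)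
  have hsinbd : ∀ (j : ℕ) (z : ℝ), Real.sin (j * z) ^ 2 ≤ 1 := by
    intro j z; exact Real.sin_sq_le_one _
  have hsinpos : ∀ (j : ℕ) (z : ℝ), 0 ≤ Real.sin (j * z) ^ 2 := fun _ _ => sq_nonneg _
  have hbd2 : ∀ (j : ℕ) (z : ℝ), |a z ^ 2 * Real.sin (j * z) ^ 2| ≤ M := by
    intro j z
    rw [abs_of_nonneg (by positivity)]
    nlinarith [haM z, hsinbd j z, hsinpos j z, sq_nonneg (a z)]
  have hbd4 : ∀ (j : ℕ) (z : ℝ), |a z ^ 4 * Real.sin (j * z) ^ 2| ≤ M ^ 2 := by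
    intro j z
    rw [abs_of_nonneg (by positivity)]
    nlinarith [haM4 z, hsinbd j z, hsinpos j z, pow_le_pow_left₀ (by positivity : (0:ℝ) ≤ a z ^ 2) (haM z) 2]
  have hint2 : ∀ j : ℕ,
      IntervalIntegrable (fun z => a z ^ 2 * Real.sin (j * z) ^ 2) volume 0 π := by
    intro j
    exact bdd_meas_intervalIntegrable_aux ((hma.pow_const 2).mul (hsin_meas j)) M (hbd2 j)
  have hint4 : ∀ j : ℕ,
      IntervalIntegrable (fun z => a z ^ 4 * Real.sin (j * z) ^ 2) volume 0 π := by
    intro j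
    exact bdd_meas_intervalIntegrable_aux ((hma.pow_const 4).mul (hsin_meas j)) (M ^ 2) (hbd4 j)
  have hintsin : ∀ j : ℕ,
      IntervalIntegrable (fun z => Real.sin (j * z) ^ 2) volume 0 π :=
    fun j => Continuous.intervalIntegrable (by fun_prop) 0 π
  -- bounds on A and B
  have hAbd : ∀ j, |A j| ≤ M * π := by
    intro j
    have := intervalIntegral.norm_integral_le_of_norm_le_const
      (C := M) (f := fun z => a z ^ 2 * Real.sin (j * z) ^ 2) (a := (0:ℝ)) (b := π)
      (fun x _ => by rw [Real.norm_eq_abs]; exact hbd2 j x)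
    simpa [Real.norm_eq_abs, abs_of_nonneg hπ.le] using this
  have hBbd : ∀ j, |B j| ≤ M ^ 2 * π := by
    intro j
    have := intervalIntegral.norm_integral_le_of_norm_le_const
      (C := M ^ 2) (f := fun z => a z ^ 4 * Real.sin (j * z) ^ 2) (a := (0:ℝ)) (b := π)
      (fun x _ => by rw [Real.norm_eq_abs]; exact hbd4 j x)
    simpa [Real.norm_eq_abs, abs_of_nonneg hπ.le] using this
  -- integral computations
  have hφsq : ∀ j : ℕ, 1 ≤ j → (∫ z in (0:ℝ)..π, (φ j z) ^ 2) = π / 2 := by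
    intro j hj
    rw [intervalIntegral.integral_congr (g := fun z => Real.sin (j * z) ^ 2)
      (fun z _ => by rw [hφ])]
    exact sinsq_integral_aux j hj
  have hcross : ∀ j : ℕ, 1 ≤ j →
      (∫ z in (0:ℝ)..π, φ j z * Lφ j z) = -(j:ℝ) ^ 2 * (π / 2) + A j := by
    intro j hj
    rw [intervalIntegral.integral_congr
      (g := fun z => (-(j:ℝ) ^ 2) * Real.sin (j * z) ^ 2 + a z ^ 2 * Real.sin (j * z) ^ 2)
      (fun z _ => by rw [hφ, hLφ]; ring)]
    rw [intervalIntegral.integral_add ((hintsin j).const_mul _) (hint2 j),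
      intervalIntegral.integral_const_mul, sinsq_integral_aux j hj]
  have hden : ∀ j : ℕ, 1 ≤ j →
      (∫ z in (0:ℝ)..π, (Lφ j z) ^ 2)
        = (j:ℝ) ^ 4 * (π / 2) - 2 * (j:ℝ) ^ 2 * A j + B j := by
    intro j hj
    rw [intervalIntegral.integral_congr
      (g := fun z => ((j:ℝ) ^ 4) * Real.sin (j * z) ^ 2
        - (2 * (j:ℝ) ^ 2) * (a z ^ 2 * Real.sin (j * z) ^ 2)
        + a z ^ 4 * Real.sin (j * z) ^ 2)
      (fun z _ => by rw [hLφ]; ring)]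
    rw [intervalIntegral.integral_add
        (((hintsin j).const_mul _).sub ((hint2 j).const_mul _)) (hint4 j),
      intervalIntegral.integral_sub ((hintsin j).const_mul _) ((hint2 j).const_mul _),
      intervalIntegral.integral_const_mul, intervalIntegral.integral_const_mul,
      sinsq_integral_aux j hj]
  -- closed form for E
  have hπne : (π:ℝ) ≠ 0 := hπ.ne'
  set N : ℕ → ℝ := fun j => B j - (2 / π) * (A j) ^ 2 with hNdef
  set D : ℕ → ℝ := fun j => (j:ℝ) ^ 4 * (π / 2) - 2 * (j:ℝ) ^ 2 * A j + B j with hDdef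
  have hEform : ∀ j : ℕ, 1 ≤ j → E j = N j / D j := by
    intro j hj
    rw [hE, hμ, hφsq j hj, hcross j hj, hden j hj]
    have : ((-(j:ℝ) ^ 2 * (π / 2) + A j) / (π / 2)) ^ 2 * (π / 2)
        = (j:ℝ) ^ 4 * (π / 2) - 2 * (j:ℝ) ^ 2 * A j + (2 / π) * (A j) ^ 2 := by
      field_simp
      ring
    rw [this, hNdef, hDdef]
    congr 1
    ring
  -- bound on N
  have hNbd : ∀ j, |N j| ≤ M ^ 2 * π + (2 / π) * (M * π) ^ 2 := by
    intro j
    have h1 := hBbd j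
    have h2 := hAbd j
    have h3 : (A j) ^ 2 ≤ (M * π) ^ 2 := by
      nlinarith [abs_nonneg (A j), sq_abs (A j)]
    have h4 : |N j| ≤ |B j| + |(2 / π) * (A j) ^ 2| := by
      have hNe : N j = B j - (2 / π) * (A j) ^ 2 := by rw [hNdef]
      rw [hNe]; exact abs_sub _ _
    have h5 : |(2 / π) * (A j) ^ 2| = (2 / π) * (A j) ^ 2 := by
      rw [abs_of_nonneg (by positivity)]
    have h6 : (2 / π) * (A j) ^ 2 ≤ (2 / π) * (M * π) ^ 2 := by
      apply mul_le_mul_of_nonneg_left h3 (by positivity)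
    calc |N j| ≤ |B j| + |(2 / π) * (A j) ^ 2| := h4
      _ = |B j| + (2 / π) * (A j) ^ 2 := by rw [h5]
      _ ≤ M ^ 2 * π + (2 / π) * (M * π) ^ 2 := add_le_add h1 h6
  -- limits
  have hjpow : ∀ n : ℕ, n ≠ 0 → Tendsto (fun j : ℕ => ((j:ℝ)) ^ n) atTop atTop :=
    fun n hn => (tendsto_pow_atTop hn).comp tendsto_natCast_atTop_atTop
  have hratio : ∀ (f : ℕ → ℝ) (C : ℝ) (n : ℕ), n ≠ 0 → (∀ j, |f j| ≤ C) →
      Tendsto (fun j : ℕ => f j / (j:ℝ) ^ n) atTop (nhds 0) := by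
    intro f C n hn hf
    refine squeeze_zero_norm (a := fun j : ℕ => C / (j:ℝ) ^ n) (fun j => ?_)
      (tendsto_const_nhds.div_atTop (hjpow n hn))
    rcases Nat.eq_zero_or_pos j with rfl | hj
    · simp [zero_pow hn]
    · have hjn : (0:ℝ) < (j:ℝ) ^ n := pow_pos (by exact_mod_cast hj) n
      rw [Real.norm_eq_abs, abs_div, abs_of_nonneg hjn.le, div_le_div_iff_of_pos_right hjn]
      exact hf j
  have hflim : Tendsto (fun j : ℕ => N j / (j:ℝ) ^ 4) atTop (nhds 0) :=
    hratio N _ 4 (by norm_num) hNbd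
  have hA2lim : Tendsto (fun j : ℕ => A j / (j:ℝ) ^ 2) atTop (nhds 0) :=
    hratio A _ 2 (by norm_num) hAbd
  have hB4lim : Tendsto (fun j : ℕ => B j / (j:ℝ) ^ 4) atTop (nhds 0) :=
    hratio B _ 4 (by norm_num) hBbd
  have hglim : Tendsto (fun j : ℕ => D j / (j:ℝ) ^ 4) atTop (nhds (π / 2)) := by
    have h1 : Tendsto (fun j : ℕ => π / 2 - 2 * (A j / (j:ℝ) ^ 2) + B j / (j:ℝ) ^ 4)
        atTop (nhds (π / 2)) := by
      have h2 : Tendsto (fun j : ℕ => 2 * (A j / (j:ℝ) ^ 2)) atTop (nhds 0) := by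
        have := hA2lim.const_mul 2
        simpa using this
      have := ((tendsto_const_nhds (x := π / 2)).sub h2).add hB4lim
      simpa using this
    apply h1.congr'
    filter_upwards [eventually_ge_atTop 1] with j hj
    have hj0 : ((j:ℝ)) ≠ 0 := Nat.cast_ne_zero.2 (by omega)
    rw [hDdef]
    field_simp
  have hmain : Tendsto (fun j : ℕ => (N j / (j:ℝ) ^ 4) / (D j / (j:ℝ) ^ 4)) atTop (nhds 0) := by
    have := hflim.div hglim (by positivity)
    rw [zero_div] at this
    exact this
  apply hmain.congr'
  filter_upwards [eventually_ge_atTop 1] with j hj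
  have hj0 : ((j:ℝ)) ^ 4 ≠ 0 := by
    have : ((j:ℝ)) ≠ 0 := Nat.cast_ne_zero.2 (by omega)
    positivity
  rw [div_div_div_aux _ _ _ hj0, hEform j hj]
end
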